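/- arXiv:2503.24151 — 2 statements merged into one kernel-verified Lean document; each statement's English description precedes it below -/
import Mathlib

section
/- Consider the interconnection of the plant with the ℓ1-controller. Let μ = 2λ_min(R + λĤᵀQĤ) > 0 and L = 2λ_max(R + λĤᵀQĤ), and assume η ∈ (0, 2μ/L²). Then for every k ≥ 0, ‖u_{k+1} − u_{k+1}*‖ ≤ α·‖u_k − u_k*‖ + η·(L_T^y·‖C‖/√(λ_min(P)))·‖x_k − x_{ss,k}‖_P + η·L_T^y·‖H − Ĥ‖·‖u_k‖ + ‖u_{k+1}* − u_k*‖, where α = √(1 − η(2μ − ηL²)) ∈ [0,1) and L_T^y = 2λ‖ĤᵀQ‖. -/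
open Matrix BigOperators

/-- Euclidean norm of a vector in `ℝ^a`. -/
noncomputable def enorm {a : ℕ} (x : Fin a → ℝ) : ℝ := Real.sqrt (∑ i, x i ^ 2)

/-- Spectral (ℓ2-operator) norm of a matrix. -/
noncomputable def spec {a b : ℕ} (M : Matrix (Fin a) (Fin b) ℝ) : ℝ :=
  ‖LinearMap.toContinuousLinearMap (Matrix.toEuclideanLin M)‖

/-- Largest eigenvalue of a symmetric matrix (Rayleigh quotient over the unit sphere). -/
noncomputable def eigMax {a : ℕ} (P : Matrix (Fin a) (Fin a) ℝ) : ℝ :=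
  sSup {r : ℝ | ∃ x : Fin a → ℝ, ∑ i, x i ^ 2 = 1 ∧ r = x ⬝ᵥ P *ᵥ x}

/-- Smallest eigenvalue of a symmetric matrix (Rayleigh quotient over the unit sphere). -/
noncomputable def eigMin {a : ℕ} (P : Matrix (Fin a) (Fin a) ℝ) : ℝ :=
  sInf {r : ℝ | ∃ x : Fin a → ℝ, ∑ i, x i ^ 2 = 1 ∧ r = x ⬝ᵥ P *ᵥ x}

/-- The `P`-weighted norm `‖x‖_P = √(xᵀ P x)`. -/
noncomputable def pnorm {a : ℕ} (P : Matrix (Fin a) (Fin a) ℝ) (x : Fin a → ℝ) : ℝ :=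
  Real.sqrt (x ⬝ᵥ P *ᵥ x)

/-- Soft-thresholding: the proximal operator of `v ↦ η ρᵀ|v|`. -/
noncomputable def softThreshold {a : ℕ} (η : ℝ) (ρ : Fin a → ℝ) (v : Fin a → ℝ) :
    Fin a → ℝ :=
  fun i => Real.sign (v i) * max (|v i| - η * ρ i) 0

/-- The ℓ1-regularized objective
`Φ_{ℓ1,k}(v) = vᵀRv + λ(Ĥv + d − r)ᵀQ(Ĥv + d − r) + ∑ i, ρ_i |v_i|`. -/
noncomputable def Phi1 {m p : ℕ} (R : Matrix (Fin m) (Fin m) ℝ) (Q : Matrix (Fin p) (Fin p) ℝ)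
    (lam : ℝ) (ρcol : Fin m → ℝ) (Hhat : Matrix (Fin p) (Fin m) ℝ) (d rk : Fin p → ℝ)
    (v : Fin m → ℝ) : ℝ :=
  v ⬝ᵥ R *ᵥ v + lam * ((Hhat *ᵥ v + d - rk) ⬝ᵥ Q *ᵥ (Hhat *ᵥ v + d - rk))
    + ∑ i, ρcol i * |v i|

/-! ### Auxiliary lemmas -/

section Aux

lemma enorm_eq_norm {a : ℕ} (x : Fin a → ℝ) :
    _root_.enorm x = ‖(WithLp.equiv 2 (Fin a → ℝ)).symm x‖ := by
  rw [EuclideanSpace.norm_eq]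
  simp [_root_.enorm, sq_abs]

lemma enorm_nonneg' {a : ℕ} (x : Fin a → ℝ) : 0 ≤ _root_.enorm x := Real.sqrt_nonneg _

lemma enorm_add_le' {a : ℕ} (x y : Fin a → ℝ) : _root_.enorm (x + y) ≤ _root_.enorm x + _root_.enorm y := by
  simp only [enorm_eq_norm]
  rw [show (WithLp.equiv 2 (Fin a → ℝ)).symm (x + y)
      = (WithLp.equiv 2 (Fin a → ℝ)).symm x + (WithLp.equiv 2 (Fin a → ℝ)).symm y from rfl]
  exact norm_add_le _ _

lemma enorm_smul' {a : ℕ} (c : ℝ) (x : Fin a → ℝ) : _root_.enorm (c • x) = |c| * _root_.enorm x := by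
  simp only [enorm_eq_norm]
  rw [show (WithLp.equiv 2 (Fin a → ℝ)).symm (c • x)
      = c • (WithLp.equiv 2 (Fin a → ℝ)).symm x from rfl]
  rw [norm_smul]; simp

lemma enorm_neg' {a : ℕ} (x : Fin a → ℝ) : _root_.enorm (-x) = _root_.enorm x := by
  have := enorm_smul' (-1 : ℝ) x
  simpa using this

lemma enorm_sub_le' {a : ℕ} (x y : Fin a → ℝ) : _root_.enorm (x - y) ≤ _root_.enorm x + _root_.enorm y := by
  rw [sub_eq_add_neg]
  exact (enorm_add_le' x (-y)).trans (by rw [enorm_neg'])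

lemma enorm_sub_comm {a : ℕ} (x y : Fin a → ℝ) : _root_.enorm (x - y) = _root_.enorm (y - x) := by
  rw [show x - y = -(y - x) by abel, enorm_neg']

lemma spec_nonneg {a b : ℕ} (M : Matrix (Fin a) (Fin b) ℝ) : 0 ≤ spec M := norm_nonneg _

lemma enorm_mulVec_le {a b : ℕ} (M : Matrix (Fin a) (Fin b) ℝ) (x : Fin b → ℝ) :
    _root_.enorm (M *ᵥ x) ≤ spec M * _root_.enorm x := by
  have h := (LinearMap.toContinuousLinearMap (Matrix.toEuclideanLin M)).le_opNorm
    ((WithLp.equiv 2 (Fin b → ℝ)).symm x)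
  rw [LinearMap.coe_toContinuousLinearMap'] at h
  rw [show Matrix.toEuclideanLin M ((WithLp.equiv 2 (Fin b → ℝ)).symm x)
      = (WithLp.equiv 2 (Fin a → ℝ)).symm (M *ᵥ x) from rfl] at h
  simpa [enorm_eq_norm, spec] using h

lemma rayleigh_abs_bound {a : ℕ} (M : Matrix (Fin a) (Fin a) ℝ) (x : Fin a → ℝ)
    (hx : ∑ i, x i ^ 2 = 1) : |x ⬝ᵥ M *ᵥ x| ≤ ∑ i, ∑ j, |M i j| := by
  have hx1 : ∀ i, |x i| ≤ 1 := by
    intro i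
    rw [← sq_le_one_iff_abs_le_one]
    rw [← hx]
    exact Finset.single_le_sum (fun j _ => sq_nonneg (x j)) (Finset.mem_univ i)
  calc |x ⬝ᵥ M *ᵥ x| ≤ ∑ i, |x i * (M *ᵥ x) i| := Finset.abs_sum_le_sum_abs _ _
    _ ≤ ∑ i, ∑ j, |M i j| := by
        apply Finset.sum_le_sum; intro i _
        rw [abs_mul]
        calc |x i| * |(M *ᵥ x) i| ≤ 1 * |(M *ᵥ x) i| := by
              apply mul_le_mul_of_nonneg_right (hx1 i) (abs_nonneg _)
          _ = |(M *ᵥ x) i| := one_mul _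
          _ ≤ ∑ j, |M i j * x j| := by
              rw [Matrix.mulVec, dotProduct]
              exact Finset.abs_sum_le_sum_abs _ _
          _ ≤ ∑ j, |M i j| := by
              apply Finset.sum_le_sum; intro j _
              rw [abs_mul]
              calc |M i j| * |x j| ≤ |M i j| * 1 :=
                    mul_le_mul_of_nonneg_left (hx1 j) (abs_nonneg _)
                _ = |M i j| := mul_one _

lemma rayleigh_bddAbove {a : ℕ} (M : Matrix (Fin a) (Fin a) ℝ) :
    BddAbove {r : ℝ | ∃ x : Fin a → ℝ, ∑ i, x i ^ 2 = 1 ∧ r = x ⬝ᵥ M *ᵥ x} := by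
  refine ⟨∑ i, ∑ j, |M i j|, ?_⟩
  rintro r ⟨x, hx, rfl⟩
  exact le_of_abs_le (rayleigh_abs_bound M x hx)

lemma rayleigh_bddBelow {a : ℕ} (M : Matrix (Fin a) (Fin a) ℝ) :
    BddBelow {r : ℝ | ∃ x : Fin a → ℝ, ∑ i, x i ^ 2 = 1 ∧ r = x ⬝ᵥ M *ᵥ x} := by
  refine ⟨-(∑ i, ∑ j, |M i j|), ?_⟩
  rintro r ⟨x, hx, rfl⟩
  exact neg_le_of_abs_le (rayleigh_abs_bound M x hx)

lemma dotProduct_smul_smul {a : ℕ} (M : Matrix (Fin a) (Fin a) ℝ) (c : ℝ) (x : Fin a → ℝ) :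
    (c • x) ⬝ᵥ M *ᵥ (c • x) = c ^ 2 * (x ⬝ᵥ M *ᵥ x) := by
  rw [Matrix.mulVec_smul, dotProduct_smul, smul_dotProduct]
  simp [sq, mul_assoc, smul_eq_mul]

lemma rayleigh_le_eigMax {a : ℕ} (M : Matrix (Fin a) (Fin a) ℝ) (x : Fin a → ℝ) :
    x ⬝ᵥ M *ᵥ x ≤ eigMax M * (∑ i, x i ^ 2) := by
  by_cases hx : (∑ i, x i ^ 2) = 0
  · have hx0 : x = 0 := by
      funext i
      have := (Finset.sum_eq_zero_iff_of_nonneg (fun j _ => sq_nonneg (x j))).1 hx i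
        (Finset.mem_univ i)
      exact pow_eq_zero_iff (by norm_num) |>.1 this
    simp [hx0, hx]
  · have hpos : 0 < ∑ i, x i ^ 2 :=
      lt_of_le_of_ne (Finset.sum_nonneg fun j _ => sq_nonneg (x j)) (Ne.symm hx)
    set s := Real.sqrt (∑ i, x i ^ 2) with hs
    have hspos : 0 < s := Real.sqrt_pos.2 hpos
    have hmem : (s⁻¹ • x) ⬝ᵥ M *ᵥ (s⁻¹ • x)
        ∈ {r : ℝ | ∃ y : Fin a → ℝ, ∑ i, y i ^ 2 = 1 ∧ r = y ⬝ᵥ M *ᵥ y} := by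
      refine ⟨s⁻¹ • x, ?_, rfl⟩
      have : ∑ i, (s⁻¹ • x) i ^ 2 = s⁻¹ ^ 2 * ∑ i, x i ^ 2 := by
        rw [Finset.mul_sum]; congr 1; funext i; simp [mul_pow]
      rw [this, inv_pow, Real.sq_sqrt hpos.le, inv_mul_cancel₀ hx]
    have hle := le_csSup (rayleigh_bddAbove M) hmem
    rw [dotProduct_smul_smul] at hle
    have h2 : x ⬝ᵥ M *ᵥ x ≤ eigMax M * s ^ 2 := by
      calc x ⬝ᵥ M *ᵥ x = s^2 * (s⁻¹^2 * (x ⬝ᵥ M *ᵥ x)) := by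
            field_simp
        _ ≤ s^2 * eigMax M := mul_le_mul_of_nonneg_left hle (by positivity)
        _ = eigMax M * s^2 := mul_comm _ _
    rwa [hs, Real.sq_sqrt hpos.le] at h2

lemma eigMin_le_rayleigh {a : ℕ} (M : Matrix (Fin a) (Fin a) ℝ) (x : Fin a → ℝ) :
    eigMin M * (∑ i, x i ^ 2) ≤ x ⬝ᵥ M *ᵥ x := by
  by_cases hx : (∑ i, x i ^ 2) = 0
  · have hx0 : x = 0 := by
      funext i
      have := (Finset.sum_eq_zero_iff_of_nonneg (fun j _ => sq_nonneg (x j))).1 hx i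
        (Finset.mem_univ i)
      exact pow_eq_zero_iff (by norm_num) |>.1 this
    simp [hx0, hx]
  · have hpos : 0 < ∑ i, x i ^ 2 :=
      lt_of_le_of_ne (Finset.sum_nonneg fun j _ => sq_nonneg (x j)) (Ne.symm hx)
    set s := Real.sqrt (∑ i, x i ^ 2) with hs
    have hspos : 0 < s := Real.sqrt_pos.2 hpos
    have hmem : (s⁻¹ • x) ⬝ᵥ M *ᵥ (s⁻¹ • x)
        ∈ {r : ℝ | ∃ y : Fin a → ℝ, ∑ i, y i ^ 2 = 1 ∧ r = y ⬝ᵥ M *ᵥ y} := by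
      refine ⟨s⁻¹ • x, ?_, rfl⟩
      have : ∑ i, (s⁻¹ • x) i ^ 2 = s⁻¹ ^ 2 * ∑ i, x i ^ 2 := by
        rw [Finset.mul_sum]; congr 1; funext i; simp [mul_pow]
      rw [this, inv_pow, Real.sq_sqrt hpos.le, inv_mul_cancel₀ hx]
    have hle := csInf_le (rayleigh_bddBelow M) hmem
    rw [dotProduct_smul_smul] at hle
    have h2 : eigMin M * s ^ 2 ≤ x ⬝ᵥ M *ᵥ x := by
      calc eigMin M * s^2 = s^2 * eigMin M := mul_comm _ _
        _ ≤ s^2 * (s⁻¹^2 * (x ⬝ᵥ M *ᵥ x)) := mul_le_mul_of_nonneg_left hle (by positivity)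
        _ = x ⬝ᵥ M *ᵥ x := by field_simp
    rwa [hs, Real.sq_sqrt hpos.le] at h2

lemma eigMin_zero_dim (M : Matrix (Fin 0) (Fin 0) ℝ) : eigMin M = 0 := by
  have : {r : ℝ | ∃ x : Fin 0 → ℝ, ∑ i, x i ^ 2 = 1 ∧ r = x ⬝ᵥ M *ᵥ x} = ∅ := by
    ext r; simp
  rw [eigMin, this, Real.sInf_empty]

lemma rayleigh_nonempty {a : ℕ} (ha : 0 < a) (M : Matrix (Fin a) (Fin a) ℝ) :
    {r : ℝ | ∃ x : Fin a → ℝ, ∑ i, x i ^ 2 = 1 ∧ r = x ⬝ᵥ M *ᵥ x}.Nonempty := by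
  refine ⟨_, Pi.single ⟨0, ha⟩ 1, ?_, rfl⟩
  rw [Finset.sum_eq_single ⟨0, ha⟩]
  · simp
  · intro b _ hb; rw [Pi.single_eq_of_ne hb]; ring
  · simp

lemma rayleigh_isCompact {a : ℕ} (M : Matrix (Fin a) (Fin a) ℝ) :
    IsCompact {r : ℝ | ∃ x : Fin a → ℝ, ∑ i, x i ^ 2 = 1 ∧ r = x ⬝ᵥ M *ᵥ x} := by
  have : {r : ℝ | ∃ x : Fin a → ℝ, ∑ i, x i ^ 2 = 1 ∧ r = x ⬝ᵥ M *ᵥ x}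
      = (fun x : Fin a → ℝ => x ⬝ᵥ M *ᵥ x) '' {x | ∑ i, x i ^ 2 = 1} := by
    ext r; constructor
    · rintro ⟨x, hx, rfl⟩; exact ⟨x, hx, rfl⟩
    · rintro ⟨x, hx, rfl⟩; exact ⟨x, hx, rfl⟩
  rw [this]
  apply IsCompact.image
  · apply Metric.isCompact_of_isClosed_isBounded
    · exact isClosed_eq (by fun_prop) continuous_const
    · rw [Metric.isBounded_iff_subset_closedBall 0]
      refine ⟨1, fun x hx => ?_⟩
      simp only [Metric.mem_closedBall, dist_zero_right]
      rw [pi_norm_le_iff_of_nonneg zero_le_one]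
      intro i
      rw [Real.norm_eq_abs, ← sq_le_one_iff_abs_le_one, ← hx]
      exact Finset.single_le_sum (fun j _ => sq_nonneg (x j)) (Finset.mem_univ i)
  · simp only [dotProduct, Matrix.mulVec]
    fun_prop

lemma eigMin_mem {a : ℕ} (ha : 0 < a) (M : Matrix (Fin a) (Fin a) ℝ) :
    eigMin M ∈ {r : ℝ | ∃ x : Fin a → ℝ, ∑ i, x i ^ 2 = 1 ∧ r = x ⬝ᵥ M *ᵥ x} :=
  (rayleigh_isCompact M).sInf_mem (rayleigh_nonempty ha M)

lemma eigMin_pos_of_posDef {a : ℕ} (ha : 0 < a) {P : Matrix (Fin a) (Fin a) ℝ}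
    (hP : P.PosDef) : 0 < eigMin P := by
  obtain ⟨x, hx, hval⟩ := eigMin_mem ha P
  have hx0 : x ≠ 0 := by
    intro h; rw [h] at hx; simp at hx
  have := hP.dotProduct_mulVec_pos hx0
  rw [hval]
  simpa using this

lemma dot_self_eq_sum_sq {a : ℕ} (x : Fin a → ℝ) : x ⬝ᵥ x = ∑ i, x i ^ 2 := by
  simp [dotProduct, sq]

lemma dot_symm {a : ℕ} {M : Matrix (Fin a) (Fin a) ℝ} (hM : Mᵀ = M) (x y : Fin a → ℝ) :
    x ⬝ᵥ M *ᵥ y = y ⬝ᵥ M *ᵥ x := by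
  rw [Matrix.dotProduct_mulVec, dotProduct_comm, ← Matrix.mulVec_transpose, hM]

lemma dot_mulVec_self_eq {a : ℕ} {M : Matrix (Fin a) (Fin a) ℝ} (hM : Mᵀ = M)
    (x z : Fin a → ℝ) : x ⬝ᵥ M *ᵥ z = (M *ᵥ x) ⬝ᵥ z := by
  rw [Matrix.dotProduct_mulVec, ← Matrix.mulVec_transpose, hM]

lemma psd_cauchy_schwarz {a : ℕ} {M : Matrix (Fin a) (Fin a) ℝ} (hM : Mᵀ = M)
    (hpsd : ∀ v : Fin a → ℝ, 0 ≤ v ⬝ᵥ M *ᵥ v) (x y : Fin a → ℝ) :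
    (x ⬝ᵥ M *ᵥ y) ^ 2 ≤ (x ⬝ᵥ M *ᵥ x) * (y ⬝ᵥ M *ᵥ y) := by
  have key : ∀ t : ℝ, 0 ≤ (y ⬝ᵥ M *ᵥ y) * (t * t) + (2 * (x ⬝ᵥ M *ᵥ y)) * t
      + (x ⬝ᵥ M *ᵥ x) := by
    intro t
    have h := hpsd (x + t • y)
    have hexp : (x + t • y) ⬝ᵥ M *ᵥ (x + t • y)
        = (x ⬝ᵥ M *ᵥ x) + t * (x ⬝ᵥ M *ᵥ y) + t * (y ⬝ᵥ M *ᵥ x)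
          + t * t * (y ⬝ᵥ M *ᵥ y) := by
      rw [Matrix.mulVec_add, dotProduct_add, add_dotProduct,
        add_dotProduct, Matrix.mulVec_smul, dotProduct_smul,
        smul_dotProduct, smul_dotProduct, dotProduct_smul]
      simp only [smul_eq_mul]
      ring
    rw [hexp] at h
    rw [dot_symm hM y x] at h
    linarith
  have hd := discrim_le_zero key
  rw [discrim] at hd
  nlinarith [hd]

lemma eigMax_nonneg {a : ℕ} (ha : 0 < a) {M : Matrix (Fin a) (Fin a) ℝ}
    (hpsd : ∀ v : Fin a → ℝ, 0 ≤ v ⬝ᵥ M *ᵥ v) : 0 ≤ eigMax M := by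
  obtain ⟨r, x, hx, rfl⟩ := rayleigh_nonempty ha M
  have := rayleigh_le_eigMax M x
  rw [hx, mul_one] at this
  exact le_trans (hpsd x) this

lemma mulVec_sq_le_eigMax {a : ℕ} {M : Matrix (Fin a) (Fin a) ℝ} (hM : Mᵀ = M)
    (hpsd : ∀ v : Fin a → ℝ, 0 ≤ v ⬝ᵥ M *ᵥ v) (hΛ : 0 ≤ eigMax M) (w : Fin a → ℝ) :
    ∑ i, (M *ᵥ w) i ^ 2 ≤ eigMax M ^ 2 * ∑ i, w i ^ 2 := by
  set q : ℝ := ∑ i, (M *ᵥ w) i ^ 2 with hq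
  have hq0 : 0 ≤ q := Finset.sum_nonneg fun i _ => sq_nonneg _
  have hqeq : w ⬝ᵥ M *ᵥ (M *ᵥ w) = q := by
    rw [dot_mulVec_self_eq hM, dot_self_eq_sum_sq]
  have hcs := psd_cauchy_schwarz hM hpsd w (M *ᵥ w)
  rw [hqeq] at hcs
  have h1 : w ⬝ᵥ M *ᵥ w ≤ eigMax M * ∑ i, w i ^ 2 := rayleigh_le_eigMax M w
  have h2 : (M *ᵥ w) ⬝ᵥ M *ᵥ (M *ᵥ w) ≤ eigMax M * q := by
    have := rayleigh_le_eigMax M (M *ᵥ w); rwa [← hq] at this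
  have h3 : 0 ≤ w ⬝ᵥ M *ᵥ w := hpsd w
  have h4 : 0 ≤ ∑ i, w i ^ 2 := Finset.sum_nonneg fun i _ => sq_nonneg _
  rcases eq_or_lt_of_le hq0 with h | h
  · rw [← h]; positivity
  · nlinarith [hcs, h1, h2, h3, h, mul_le_mul h1 h2 (hpsd _) (by positivity)]

/-- The scalar soft-thresholding function in max/min form. -/
noncomputable def st (c v : ℝ) : ℝ := max (v - c) (min (v + c) 0)

lemma st_eq_sign (c v : ℝ) (hc : 0 ≤ c) :
    Real.sign v * max (|v| - c) 0 = st c v := by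
  unfold st
  rcases lt_trichotomy v 0 with h | h | h
  · rw [Real.sign_of_neg h, abs_of_neg h]
    have h1 : v - c ≤ min (v + c) 0 := le_min (by linarith) (by linarith)
    rw [max_eq_right h1]
    rcases le_or_gt (v + c) 0 with h2 | h2
    · rw [min_eq_left h2, max_eq_left (by linarith : (0:ℝ) ≤ -v - c)]; ring
    · rw [min_eq_right h2.le, max_eq_right (by linarith : -v - c ≤ 0)]; ring
  · subst h; simp [hc, min_eq_right, max_eq_right, neg_nonpos.2 hc]
  · rw [Real.sign_of_pos h, abs_of_pos h, one_mul]
    rw [min_eq_right (by linarith : (0:ℝ) ≤ v + c)]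

lemma st_lipschitz (c v w : ℝ) : |st c v - st c w| ≤ |v - w| := by
  unfold st
  have h1 : |max (v - c) (min (v + c) 0) - max (w - c) (min (w + c) 0)|
      ≤ max |v - c - (w - c)| |min (v + c) 0 - min (w + c) 0| := abs_max_sub_max_le_max _ _ _ _
  refine h1.trans (max_le ?_ ?_)
  · simp [abs_sub_comm]
  · have := abs_min_sub_min_le_max (v + c) 0 (w + c) 0
    refine this.trans (max_le ?_ ?_) <;> simp

lemma st_subgrad (c v : ℝ) (hc : 0 ≤ c) :
    |v - st c v| ≤ c ∧ st c v * (v - st c v) = c * |st c v| := by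
  unfold st
  rcases le_or_gt c v with h | h
  · rw [max_eq_left ((min_le_right _ _).trans (by linarith : (0:ℝ) ≤ v - c))]
    constructor
    · simp [abs_of_nonneg hc]
    · rw [abs_of_nonneg (by linarith : (0:ℝ) ≤ v - c)]; ring
  · rcases le_or_gt v (-c) with h2 | h2
    · have : max (v - c) (min (v + c) 0) = v + c := by
        rw [min_eq_left (by linarith), max_eq_right (by linarith)]
      rw [this]
      constructor
      · simp [abs_of_nonneg hc]
      · rw [abs_of_nonpos (by linarith : v + c ≤ 0)]; ring
    · have : max (v - c) (min (v + c) 0) = 0 := by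
        rw [min_eq_right (by linarith), max_eq_right (by linarith)]
      rw [this]
      constructor
      · rw [sub_zero, abs_le]; constructor <;> linarith
      · simp

lemma st_strong (c v z : ℝ) (hc : 0 ≤ c) :
    (st c v - v) ^ 2 / 2 + c * |st c v| + (z - st c v) ^ 2 / 2
      ≤ (z - v) ^ 2 / 2 + c * |z| := by
  obtain ⟨h1, h2⟩ := st_subgrad c v hc
  set s := st c v
  have key : c * |z| ≥ s * (v - s) + (z - s) * (v - s) := by
    have hz : z * (v - s) ≤ |z| * |v - s| := by
      calc z * (v - s) ≤ |z * (v - s)| := le_abs_self _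
        _ = |z| * |v - s| := abs_mul _ _
    have : z * (v - s) ≤ c * |z| := by
      calc z * (v - s) ≤ |z| * |v - s| := hz
        _ ≤ |z| * c := mul_le_mul_of_nonneg_left h1 (abs_nonneg _)
        _ = c * |z| := mul_comm _ _
    linarith
  nlinarith [key, h2]

lemma softThreshold_apply {a : ℕ} (η : ℝ) (hη : 0 ≤ η) (ρ : Fin a → ℝ) (hρ : ∀ i, 0 ≤ ρ i)
    (v : Fin a → ℝ) (i : Fin a) : softThreshold η ρ v i = st (η * ρ i) (v i) :=
  st_eq_sign _ _ (mul_nonneg hη (hρ i))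

lemma softThreshold_nonexpansive {a : ℕ} (η : ℝ) (hη : 0 ≤ η) (ρ : Fin a → ℝ)
    (hρ : ∀ i, 0 ≤ ρ i) (v w : Fin a → ℝ) :
    _root_.enorm (softThreshold η ρ v - softThreshold η ρ w) ≤ _root_.enorm (v - w) := by
  unfold _root_.enorm
  apply Real.sqrt_le_sqrt
  apply Finset.sum_le_sum
  intro i _
  simp only [Pi.sub_apply, softThreshold_apply η hη ρ hρ]
  rw [← sq_abs (st (η * ρ i) (v i) - st (η * ρ i) (w i)), ← sq_abs (v i - w i)]
  exact pow_le_pow_left₀ (abs_nonneg _) (st_lipschitz _ _ _) 2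

lemma prox_strong {a : ℕ} (η : ℝ) (hη : 0 ≤ η) (ρ : Fin a → ℝ) (hρ : ∀ i, 0 ≤ ρ i)
    (v z : Fin a → ℝ) :
    (∑ i, (softThreshold η ρ v i - v i) ^ 2) / 2
      + ∑ i, (η * ρ i) * |softThreshold η ρ v i|
      + (∑ i, (z i - softThreshold η ρ v i) ^ 2) / 2
      ≤ (∑ i, (z i - v i) ^ 2) / 2 + ∑ i, (η * ρ i) * |z i| := by
  rw [Finset.sum_div, Finset.sum_div, Finset.sum_div, ← Finset.sum_add_distrib,
    ← Finset.sum_add_distrib, ← Finset.sum_add_distrib]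
  apply Finset.sum_le_sum
  intro i _
  rw [softThreshold_apply η hη ρ hρ]
  exact st_strong (η * ρ i) (v i) (z i) (mul_nonneg hη (hρ i))

lemma contraction {a : ℕ} (M : Matrix (Fin a) (Fin a) ℝ) (μ L η : ℝ) (hη : 0 < η)
    (hray_min : ∀ x : Fin a → ℝ, (μ / 2) * ∑ i, x i ^ 2 ≤ x ⬝ᵥ M *ᵥ x)
    (hray_sq : ∀ x : Fin a → ℝ, ∑ i, (M *ᵥ x) i ^ 2 ≤ (L / 2) ^ 2 * ∑ i, x i ^ 2)
    (harg : 0 ≤ 1 - η * (2 * μ - η * L ^ 2)) (δ : Fin a → ℝ) :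
    _root_.enorm (δ - (2 * η) • (M *ᵥ δ)) ≤ Real.sqrt (1 - η * (2 * μ - η * L ^ 2)) * _root_.enorm δ := by
  unfold _root_.enorm
  rw [← Real.sqrt_mul harg]
  apply Real.sqrt_le_sqrt
  have hdot : ∑ i, δ i * (M *ᵥ δ) i = δ ⬝ᵥ M *ᵥ δ := rfl
  have hexp : ∑ i, (δ - (2 * η) • (M *ᵥ δ)) i ^ 2
      = ∑ i, δ i ^ 2 - (4 * η) * ∑ i, δ i * (M *ᵥ δ) i
        + (4 * η ^ 2) * ∑ i, (M *ᵥ δ) i ^ 2 := by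
    rw [Finset.mul_sum, Finset.mul_sum, ← Finset.sum_sub_distrib, ← Finset.sum_add_distrib]
    apply Finset.sum_congr rfl
    intro i _
    simp only [Pi.sub_apply, Pi.smul_apply, smul_eq_mul]
    ring
  rw [hexp, hdot]
  have h1 := hray_min δ
  have h2 := hray_sq δ
  nlinarith [h1, h2, hη.le, sq_nonneg η]

lemma phi1_expand {m p : ℕ} (R : Matrix (Fin m) (Fin m) ℝ) (Q : Matrix (Fin p) (Fin p) ℝ)
    (hRs : Rᵀ = R) (hQs : Qᵀ = Q) (lam : ℝ) (ρ : Fin m → ℝ)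
    (Hhat : Matrix (Fin p) (Fin m) ℝ) (d rk : Fin p → ℝ) (u δ : Fin m → ℝ) :
    Phi1 R Q lam ρ Hhat d rk (u + δ) = Phi1 R Q lam ρ Hhat d rk u
      + 2 * ((R *ᵥ u + lam • (Hhatᵀ *ᵥ (Q *ᵥ (Hhat *ᵥ u + d - rk)))) ⬝ᵥ δ)
      + (δ ⬝ᵥ R *ᵥ δ + lam * ((Hhat *ᵥ δ) ⬝ᵥ Q *ᵥ (Hhat *ᵥ δ)))
      + (∑ i, ρ i * |(u + δ) i| - ∑ i, ρ i * |u i|) := by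
  unfold Phi1
  have h1 : (u + δ) ⬝ᵥ R *ᵥ (u + δ)
      = u ⬝ᵥ R *ᵥ u + 2 * ((R *ᵥ u) ⬝ᵥ δ) + δ ⬝ᵥ R *ᵥ δ := by
    rw [Matrix.mulVec_add, dotProduct_add, add_dotProduct, add_dotProduct,
      dot_mulVec_self_eq hRs u δ, dotProduct_comm δ (R *ᵥ u)]
    ring
  set b := Hhat *ᵥ u + d - rk with hbdef
  have hb : Hhat *ᵥ (u + δ) + d - rk = b + Hhat *ᵥ δ := by
    rw [Matrix.mulVec_add, hbdef]; abel
  have hcross : b ⬝ᵥ Q *ᵥ (Hhat *ᵥ δ) = (Hhatᵀ *ᵥ (Q *ᵥ b)) ⬝ᵥ δ := by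
    rw [dot_mulVec_self_eq hQs, Matrix.dotProduct_mulVec, ← Matrix.mulVec_transpose]
  have h2 : (b + Hhat *ᵥ δ) ⬝ᵥ Q *ᵥ (b + Hhat *ᵥ δ)
      = b ⬝ᵥ Q *ᵥ b + 2 * ((Hhatᵀ *ᵥ (Q *ᵥ b)) ⬝ᵥ δ)
        + (Hhat *ᵥ δ) ⬝ᵥ Q *ᵥ (Hhat *ᵥ δ) := by
    rw [Matrix.mulVec_add, dotProduct_add, add_dotProduct, add_dotProduct,
      dot_symm hQs (Hhat *ᵥ δ) b, hcross]
    ring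
  have hgrad : (R *ᵥ u + lam • (Hhatᵀ *ᵥ (Q *ᵥ b))) ⬝ᵥ δ
      = (R *ᵥ u) ⬝ᵥ δ + lam * ((Hhatᵀ *ᵥ (Q *ᵥ b)) ⬝ᵥ δ) := by
    rw [add_dotProduct, smul_dotProduct]; simp
  rw [h1, hb, h2, hgrad]
  ring

lemma fixed_point {m p : ℕ} (R : Matrix (Fin m) (Fin m) ℝ) (Q : Matrix (Fin p) (Fin p) ℝ)
    (hRs : Rᵀ = R) (hQs : Qᵀ = Q) (lam : ℝ)
    (Hhat : Matrix (Fin p) (Fin m) ℝ) (d rk : Fin p → ℝ)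
    (η L : ℝ) (hη : 0 < η) (hηL : η * L < 2)
    (ρ : Fin m → ℝ) (hρ : ∀ i, 0 ≤ ρ i)
    (hquad : ∀ x : Fin m → ℝ,
      x ⬝ᵥ R *ᵥ x + lam * ((Hhat *ᵥ x) ⬝ᵥ Q *ᵥ (Hhat *ᵥ x)) ≤ (L / 2) * ∑ i, x i ^ 2)
    (u : Fin m → ℝ)
    (hmin : ∀ v : Fin m → ℝ, v ≠ u →
      Phi1 R Q lam ρ Hhat d rk u < Phi1 R Q lam ρ Hhat d rk v) :
    u = softThreshold η ρ
      (u - (2 * η) • (R *ᵥ u + lam • (Hhatᵀ *ᵥ (Q *ᵥ (Hhat *ᵥ u + d - rk))))) := by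
  set g : Fin m → ℝ := R *ᵥ u + lam • (Hhatᵀ *ᵥ (Q *ᵥ (Hhat *ᵥ u + d - rk))) with hg
  set v : Fin m → ℝ := u - (2 * η) • g with hv
  set w : Fin m → ℝ := softThreshold η ρ v with hw
  by_contra hne
  have hwu : w ≠ u := fun h => hne h.symm
  have hlt := hmin w hwu
  set δ : Fin m → ℝ := w - u with hδ
  have hwue : w = u + δ := by rw [hδ]; abel
  have hD : (0:ℝ) < ∑ i, δ i ^ 2 := by
    have hδ0 : δ ≠ 0 := by
      intro h
      apply hwu
      have := congrArg (· + u) h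
      simpa [hδ, sub_add_cancel] using this
    obtain ⟨i, hi⟩ := Function.ne_iff.1 hδ0
    have : (0:ℝ) < δ i ^ 2 := by rw [← sq_abs]; exact pow_pos (abs_pos.2 hi) 2
    refine lt_of_lt_of_le this ?_
    exact Finset.single_le_sum (fun j _ => sq_nonneg (δ j)) (Finset.mem_univ i)
  have hps := prox_strong η hη.le ρ hρ v u
  rw [← hw] at hps
  have e1 : ∀ i, w i - v i = δ i + 2 * η * g i := by
    intro i
    simp only [hδ, hv, Pi.sub_apply, Pi.smul_apply, smul_eq_mul]
    ring
  have e2 : ∀ i, u i - v i = 2 * η * g i := by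
    intro i
    simp only [hv, Pi.sub_apply, Pi.smul_apply, smul_eq_mul]
    ring
  have e3 : ∀ i, u i - w i = -δ i := by
    intro i
    simp only [hδ, Pi.sub_apply]
    ring
  set D : ℝ := ∑ i, δ i ^ 2 with hDdef
  set G : ℝ := ∑ i, g i * δ i with hG
  set Ns : ℝ := ∑ i, g i ^ 2 with hNs
  set W : ℝ := ∑ i, ρ i * |w i| with hW
  set U : ℝ := ∑ i, ρ i * |u i| with hU
  have s1 : ∑ i, (w i - v i) ^ 2 = D + 4 * η * G + 4 * η ^ 2 * Ns := by
    rw [hDdef, hG, hNs, Finset.mul_sum, Finset.mul_sum, ← Finset.sum_add_distrib,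
      ← Finset.sum_add_distrib]
    apply Finset.sum_congr rfl; intro i _; rw [e1 i]; ring
  have s2 : ∑ i, (u i - v i) ^ 2 = 4 * η ^ 2 * Ns := by
    rw [hNs, Finset.mul_sum]
    apply Finset.sum_congr rfl; intro i _; rw [e2 i]; ring
  have s3 : ∑ i, (u i - w i) ^ 2 = D := by
    rw [hDdef]
    apply Finset.sum_congr rfl; intro i _; rw [e3 i]; ring
  have s4 : ∑ i, (η * ρ i) * |w i| = η * W := by
    rw [hW, Finset.mul_sum]
    apply Finset.sum_congr rfl; intro i _; ring
  have s5 : ∑ i, (η * ρ i) * |u i| = η * U := by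
    rw [hU, Finset.mul_sum]
    apply Finset.sum_congr rfl; intro i _; ring
  rw [s1, s2, s3, s4, s5] at hps
  have key : D + 2 * η * G + η * W ≤ η * U := by linarith
  -- expansion
  have hexp := phi1_expand R Q hRs hQs lam ρ Hhat d rk u δ
  rw [← hwue] at hexp
  have hdotg : g ⬝ᵥ δ = G := by rw [hG]; rfl
  have hquadD : δ ⬝ᵥ R *ᵥ δ + lam * ((Hhat *ᵥ δ) ⬝ᵥ Q *ᵥ (Hhat *ᵥ δ)) ≤ (L / 2) * D := by
    rw [hDdef]; exact hquad δ
  have hdiff : Phi1 R Q lam ρ Hhat d rk w - Phi1 R Q lam ρ Hhat d rk u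
      = 2 * G + (δ ⬝ᵥ R *ᵥ δ + lam * ((Hhat *ᵥ δ) ⬝ᵥ Q *ᵥ (Hhat *ᵥ δ))) + (W - U) := by
    rw [hexp, ← hg, hdotg, ← hW, ← hU]
    ring
  have h3 : 0 < Phi1 R Q lam ρ Hhat d rk w - Phi1 R Q lam ρ Hhat d rk u := by linarith
  have hq2 : η * (δ ⬝ᵥ R *ᵥ δ + lam * ((Hhat *ᵥ δ) ⬝ᵥ Q *ᵥ (Hhat *ᵥ δ)))
      ≤ η * ((L / 2) * D) := mul_le_mul_of_nonneg_left hquadD hη.le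
  have h4 : η * (Phi1 R Q lam ρ Hhat d rk w - Phi1 R Q lam ρ Hhat d rk u)
      ≤ η * (L / 2) * D - D := by
    have := hdiff
    nlinarith [key, hq2]
  have h5 : η * (L / 2) * D - D < 0 := by nlinarith [hD, hηL]
  have h6 : 0 < η * (Phi1 R Q lam ρ Hhat d rk w - Phi1 R Q lam ρ Hhat d rk u) :=
    mul_pos hη h3
  linarith

lemma herm_transpose_eq {a : ℕ} {M : Matrix (Fin a) (Fin a) ℝ} (h : M.IsHermitian) :
    Mᵀ = M := by
  calc Mᵀ = Mᴴ := by ext i j; simp [Matrix.conjTranspose_apply]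
    _ = M := h

lemma enorm_le_pnorm_div {a : ℕ} {P : Matrix (Fin a) (Fin a) ℝ} (hP : P.PosDef)
    (z : Fin a → ℝ) : _root_.enorm z ≤ pnorm P z / Real.sqrt (eigMin P) := by
  rcases Nat.eq_zero_or_pos a with ha | ha
  · subst ha
    have h0 : _root_.enorm z = 0 := by simp [_root_.enorm]
    rw [h0]
    exact div_nonneg (Real.sqrt_nonneg _) (Real.sqrt_nonneg _)
  · have hmin := eigMin_pos_of_posDef ha hP
    have h1 : eigMin P * ∑ i, z i ^ 2 ≤ z ⬝ᵥ P *ᵥ z := eigMin_le_rayleigh P z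
    have h2 : ∑ i, z i ^ 2 ≤ (z ⬝ᵥ P *ᵥ z) / eigMin P := by
      rw [le_div_iff₀ hmin]
      linarith [mul_comm (eigMin P) (∑ i, z i ^ 2)]
    have hzz : 0 ≤ z ⬝ᵥ P *ᵥ z := by
      calc (0:ℝ) ≤ eigMin P * ∑ i, z i ^ 2 := by
            exact mul_nonneg hmin.le (Finset.sum_nonneg fun i _ => sq_nonneg _)
        _ ≤ z ⬝ᵥ P *ᵥ z := h1
    calc _root_.enorm z ≤ Real.sqrt ((z ⬝ᵥ P *ᵥ z) / eigMin P) := Real.sqrt_le_sqrt h2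
      _ = pnorm P z / Real.sqrt (eigMin P) := by
          rw [pnorm, Real.sqrt_div hzz]

end Aux

/-- Lemma 2 of the paper for the ℓ1-controller (12). -/
theorem stmt12 {n m p : ℕ}
    (A : Matrix (Fin n) (Fin n) ℝ) (B : Matrix (Fin n) (Fin m) ℝ) (C : Matrix (Fin p) (Fin n) ℝ)
    (hA : spectralRadius ℂ (A.map Complex.ofReal) < 1)
    (Qbar P : Matrix (Fin n) (Fin n) ℝ) (hQbar : Qbar.PosDef) (hP : P.PosDef)
    (hLyap : Aᵀ * P * A - P + Qbar = 0)
    (R : Matrix (Fin m) (Fin m) ℝ) (Q : Matrix (Fin p) (Fin p) ℝ)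
    (hR : R.PosSemidef) (hQ : Q.PosSemidef)
    (lam : ℝ) (hlam : 0 ≤ lam) (Hhat : Matrix (Fin p) (Fin m) ℝ)
    (hS : ((2 : ℝ) • (R + lam • (Hhatᵀ * Q * Hhat))).PosDef)
    (μ L : ℝ)
    (hμ : μ = 2 * eigMin (R + lam • (Hhatᵀ * Q * Hhat)))
    (hμpos : 0 < μ)
    (hL : L = 2 * eigMax (R + lam • (Hhatᵀ * Q * Hhat)))
    (r : ℕ → Fin p → ℝ) (η : ℝ) (hη : 0 < η) (hηrange : η < 2 * μ / L ^ 2)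
    (ρcol : Fin m → ℝ) (hρcol : ∀ i, 0 ≤ ρcol i)
    (dx : ℕ → Fin n → ℝ) (dy : ℕ → Fin p → ℝ)
    (x : ℕ → Fin n → ℝ) (u : ℕ → Fin m → ℝ) (y : ℕ → Fin p → ℝ)
    (hdyn : ∀ k, x (k + 1) = A *ᵥ x k + B *ᵥ u k + dx k)
    (hout : ∀ k, y k = C *ᵥ x k + dy k)
    (hctrl : ∀ k, u (k + 1) =
      softThreshold η ρcol (u k - (2 * η) • (R *ᵥ u k + lam • (Hhatᵀ *ᵥ (Q *ᵥ (y k - r k))))))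
    (ustar : ℕ → Fin m → ℝ)
    (hustar : ∀ k, ∀ v : Fin m → ℝ, v ≠ ustar k →
      Phi1 R Q lam ρcol Hhat (C *ᵥ ((1 - A)⁻¹ *ᵥ dx k) + dy k) (r k) (ustar k)
        < Phi1 R Q lam ρcol Hhat (C *ᵥ ((1 - A)⁻¹ *ᵥ dx k) + dy k) (r k) v)
    (H : Matrix (Fin p) (Fin m) ℝ) (hH : H = C * (1 - A)⁻¹ * B)
    (xss : ℕ → Fin n → ℝ) (hxss : ∀ k, xss k = (1 - A)⁻¹ *ᵥ (B *ᵥ u k + dx k))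
    (α LTy : ℝ)
    (hα : α = Real.sqrt (1 - η * (2 * μ - η * L ^ 2)))
    (hLTy : LTy = 2 * lam * spec (Hhatᵀ * Q)) :
    (0 ≤ α ∧ α < 1) ∧
      ∀ k : ℕ,
        _root_.enorm (u (k + 1) - ustar (k + 1))
          ≤ α * _root_.enorm (u k - ustar k)
            + η * (LTy * spec C / Real.sqrt (eigMin P)) * pnorm P (x k - xss k)
            + η * LTy * spec (H - Hhat) * _root_.enorm (u k)
            + _root_.enorm (ustar (k + 1) - ustar k) := by
  set M : Matrix (Fin m) (Fin m) ℝ := R + lam • (Hhatᵀ * Q * Hhat) with hM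
  have hRs : Rᵀ = R := herm_transpose_eq hR.1
  have hQs : Qᵀ = Q := herm_transpose_eq hQ.1
  have hMs : Mᵀ = M := by
    rw [hM]
    simp [Matrix.transpose_add, Matrix.transpose_smul, Matrix.transpose_mul,
      Matrix.transpose_transpose, hRs, hQs, Matrix.mul_assoc]
  have hMpsd : ∀ v : Fin m → ℝ, 0 ≤ v ⬝ᵥ M *ᵥ v := by
    intro v
    by_cases hv : v = 0
    · simp [hv]
    · have h := hS.dotProduct_mulVec_pos hv
      rw [show star v = v from funext fun i => rfl] at h
      rw [Matrix.smul_mulVec, dotProduct_smul] at h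
      rw [smul_eq_mul] at h
      linarith
  have hm0 : 0 < m := by
    by_contra h
    push_neg at h
    have hm : m = 0 := Nat.le_zero.1 h
    subst hm
    rw [hμ, eigMin_zero_dim] at hμpos
    norm_num at hμpos
  obtain ⟨x0, hx01, hx0v⟩ := eigMin_mem hm0 M
  have hminmax : eigMin M ≤ eigMax M := by
    calc eigMin M = x0 ⬝ᵥ M *ᵥ x0 := hx0v
      _ ≤ eigMax M * (∑ i, x0 i ^ 2) := rayleigh_le_eigMax M x0
      _ = eigMax M := by rw [hx01, mul_one]
  have hμL : μ ≤ L := by rw [hμ, hL]; linarith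
  have hLpos : 0 < L := lt_of_lt_of_le hμpos hμL
  have hηL2 : η * L ^ 2 < 2 * μ := by
    have hL2 : 0 < L ^ 2 := by positivity
    exact (lt_div_iff₀ hL2).1 hηrange
  have harg0 : 0 ≤ 1 - η * (2 * μ - η * L ^ 2) := by
    nlinarith [sq_nonneg (1 - η * L), mul_nonneg hη.le (sub_nonneg.2 hμL)]
  have hargLt : 1 - η * (2 * μ - η * L ^ 2) < 1 := by
    nlinarith [mul_pos hη (by linarith : (0:ℝ) < 2 * μ - η * L ^ 2)]
  have hα0 : 0 ≤ α := hα ▸ Real.sqrt_nonneg _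
  have hα1 : α < 1 := by
    rw [hα]
    have := Real.sqrt_lt_sqrt harg0 hargLt
    rwa [Real.sqrt_one] at this
  refine ⟨⟨hα0, hα1⟩, ?_⟩
  intro k
  have hηL1 : η * L < 2 := by
    have h1 : η * L * L < 2 * L := by nlinarith
    exact lt_of_mul_lt_mul_right h1 hLpos.le
  have hquadM : ∀ z : Fin m → ℝ,
      z ⬝ᵥ R *ᵥ z + lam * ((Hhat *ᵥ z) ⬝ᵥ Q *ᵥ (Hhat *ᵥ z)) ≤ (L / 2) * ∑ i, z i ^ 2 := by
    intro z
    have hdec : z ⬝ᵥ M *ᵥ z = z ⬝ᵥ R *ᵥ z + lam * ((Hhat *ᵥ z) ⬝ᵥ Q *ᵥ (Hhat *ᵥ z)) := by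
      rw [hM, Matrix.add_mulVec, dotProduct_add, Matrix.smul_mulVec,
        dotProduct_smul, ← Matrix.mulVec_mulVec, ← Matrix.mulVec_mulVec,
        Matrix.dotProduct_mulVec z Hhatᵀ _, Matrix.vecMul_transpose]
      simp [smul_eq_mul]
    rw [← hdec]
    have hthis := rayleigh_le_eigMax M z
    have hLe : eigMax M = L / 2 := by rw [hL]; ring
    rw [hLe] at hthis; exact hthis
  have hray_min : ∀ z : Fin m → ℝ, (μ / 2) * ∑ i, z i ^ 2 ≤ z ⬝ᵥ M *ᵥ z := by
    intro z
    have hμe : μ / 2 = eigMin M := by rw [hμ]; ring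
    rw [hμe]; exact eigMin_le_rayleigh M z
  have hray_sq : ∀ z : Fin m → ℝ, ∑ i, (M *ᵥ z) i ^ 2 ≤ (L / 2) ^ 2 * ∑ i, z i ^ 2 := by
    intro z
    have hLe : eigMax M = L / 2 := by rw [hL]; ring
    have hthis := mulVec_sq_le_eigMax hMs hMpsd (eigMax_nonneg hm0 hMpsd) z
    rwa [hLe] at hthis
  set dk : Fin p → ℝ := C *ᵥ ((1 - A)⁻¹ *ᵥ dx k) + dy k with hdk
  set v1 : Fin m → ℝ :=
    u k - (2 * η) • (R *ᵥ u k + lam • (Hhatᵀ *ᵥ (Q *ᵥ (y k - r k)))) with hv1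
  set v2 : Fin m → ℝ :=
    ustar k - (2 * η) • (R *ᵥ ustar k
      + lam • (Hhatᵀ *ᵥ (Q *ᵥ (Hhat *ᵥ ustar k + dk - r k)))) with hv2
  have hfix : ustar k = softThreshold η ρcol v2 :=
    fixed_point R Q hRs hQs lam Hhat dk (r k) η L hη hηL1 ρcol hρcol hquadM (ustar k)
      (hustar k)
  set e : Fin p → ℝ := C *ᵥ (x k - xss k) + (H - Hhat) *ᵥ u k with he
  have hyk : y k - Hhat *ᵥ u k - dk = e := by
    rw [he, hout k, hxss k, hH, hdk]
    simp only [Matrix.sub_mulVec, Matrix.mulVec_add, Matrix.mulVec_sub,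
      ← Matrix.mulVec_mulVec]
    abel
  have hkey : v1 - v2 = ((u k - ustar k) - (2 * η) • (M *ᵥ (u k - ustar k)))
      - (2 * η * lam) • (Hhatᵀ *ᵥ (Q *ᵥ e)) := by
    rw [← hyk, hv1, hv2, hM]
    simp only [Matrix.add_mulVec, Matrix.smul_mulVec, ← Matrix.mulVec_mulVec,
      Matrix.mulVec_sub, Matrix.mulVec_add, Matrix.sub_mulVec]
    module
  have hprox : u (k + 1) - ustar k = softThreshold η ρcol v1 - softThreshold η ρcol v2 := by
    rw [hctrl k, ← hfix]
  have t1 : _root_.enorm (u (k + 1) - ustar (k + 1))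
      ≤ _root_.enorm (u (k + 1) - ustar k) + _root_.enorm (ustar (k + 1) - ustar k) := by
    have hsplit : u (k + 1) - ustar (k + 1)
        = (u (k + 1) - ustar k) + (ustar k - ustar (k + 1)) := by abel
    rw [hsplit]
    exact (enorm_add_le' _ _).trans
      (by rw [enorm_sub_comm (ustar k) (ustar (k + 1))])
  have t2 : _root_.enorm (u (k + 1) - ustar k) ≤ _root_.enorm (v1 - v2) := by
    rw [hprox]
    exact softThreshold_nonexpansive η hη.le ρcol hρcol v1 v2
  have t3 : _root_.enorm (v1 - v2)
      ≤ _root_.enorm ((u k - ustar k) - (2 * η) • (M *ᵥ (u k - ustar k)))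
        + _root_.enorm ((2 * η * lam) • (Hhatᵀ *ᵥ (Q *ᵥ e))) := by
    rw [hkey]; exact enorm_sub_le' _ _
  have t4 : _root_.enorm ((u k - ustar k) - (2 * η) • (M *ᵥ (u k - ustar k)))
      ≤ α * _root_.enorm (u k - ustar k) := by
    rw [hα]
    exact contraction M μ L η hη hray_min hray_sq harg0 _
  have t5 : _root_.enorm ((2 * η * lam) • (Hhatᵀ *ᵥ (Q *ᵥ e))) ≤ η * LTy * _root_.enorm e := by
    rw [enorm_smul', abs_of_nonneg (by positivity : (0:ℝ) ≤ 2 * η * lam),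
      Matrix.mulVec_mulVec, hLTy]
    calc 2 * η * lam * _root_.enorm ((Hhatᵀ * Q) *ᵥ e)
        ≤ 2 * η * lam * (spec (Hhatᵀ * Q) * _root_.enorm e) :=
          mul_le_mul_of_nonneg_left (enorm_mulVec_le _ _) (by positivity)
      _ = η * (2 * lam * spec (Hhatᵀ * Q)) * _root_.enorm e := by ring
  have t6 : _root_.enorm e ≤ spec C * _root_.enorm (x k - xss k) + spec (H - Hhat) * _root_.enorm (u k) := by
    rw [he]
    exact (enorm_add_le' _ _).trans
      (add_le_add (enorm_mulVec_le _ _) (enorm_mulVec_le _ _))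
  have t7 : _root_.enorm (x k - xss k) ≤ pnorm P (x k - xss k) / Real.sqrt (eigMin P) :=
    enorm_le_pnorm_div hP _
  have hLTy0 : 0 ≤ LTy := by
    rw [hLTy]
    exact mul_nonneg (by positivity) (spec_nonneg _)
  have h8 : η * LTy * _root_.enorm e
      ≤ η * LTy * (spec C * (pnorm P (x k - xss k) / Real.sqrt (eigMin P))
        + spec (H - Hhat) * _root_.enorm (u k)) := by
    apply mul_le_mul_of_nonneg_left _ (mul_nonneg hη.le hLTy0)
    exact t6.trans (add_le_add_left
      (mul_le_mul_of_nonneg_left t7 (spec_nonneg _)) _)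
  have heq : η * LTy * (spec C * (pnorm P (x k - xss k) / Real.sqrt (eigMin P))
        + spec (H - Hhat) * _root_.enorm (u k))
      = η * (LTy * spec C / Real.sqrt (eigMin P)) * pnorm P (x k - xss k)
        + η * LTy * spec (H - Hhat) * _root_.enorm (u k) := by ring
  have hchain : _root_.enorm (u (k + 1) - ustar k)
      ≤ α * _root_.enorm (u k - ustar k) + η * LTy * _root_.enorm e :=
    t2.trans (t3.trans (add_le_add t4 t5))
  linarith [t1, hchain, h8, heq.le, heq.ge]
end

section
/- Let γ ∈ (0,1), let μ, L > 0 with μ ≤ L, and let a, b > 0. For η ∈ [0, 2μ/L²] define α(η) = √(1 − η(2μ − ηL²)), c1(η) = √(1−γ) + b·η, and g(η) = a·η² + α(η) + c1(η) − α(η)·c1(η). Then g(0) = 1 and there exists η* ∈ (0, 2μ/L²) such that g(η) < 1 for all η ∈ (0, η*). -/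
/-- Step-size existence argument in the proof of Theorem 2: `g(0) = 1` and `g(η) < 1`
for all sufficiently small positive `η`. -/
theorem stmt16 (γ μ L a b : ℝ) (hγ0 : 0 < γ) (hγ1 : γ < 1)
    (hμ : 0 < μ) (hL : 0 < L) (hμL : μ ≤ L) (ha : 0 < a) (hb : 0 < b)
    (α c1 g : ℝ → ℝ)
    (hα : ∀ η, α η = Real.sqrt (1 - η * (2 * μ - η * L ^ 2)))
    (hc1 : ∀ η, c1 η = Real.sqrt (1 - γ) + b * η)
    (hg : ∀ η, g η = a * η ^ 2 + α η + c1 η - α η * c1 η) :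
    g 0 = 1 ∧ ∃ ηstar : ℝ, 0 < ηstar ∧ ηstar < 2 * μ / L ^ 2 ∧
      ∀ η : ℝ, 0 < η → η < ηstar → g η < 1 := by
  set s := Real.sqrt (1 - γ) with hs
  have hs0 : 0 ≤ s := Real.sqrt_nonneg _
  have hs1 : s < 1 := by
    have h := Real.sqrt_lt_sqrt (by linarith : (0:ℝ) ≤ 1 - γ) (by linarith : 1 - γ < 1)
    simpa using h
  have hs1' : 0 < 1 - s := by linarith
  have hL2 : (0:ℝ) < L ^ 2 := by positivity
  constructor
  · rw [hg, hα, hc1]; simp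
  · refine ⟨min (min (μ / L ^ 2) ((1 - s) / (2 * b))) (μ * (1 - s) / (4 * a)),
      lt_min (lt_min (by positivity) (div_pos hs1' (by positivity)))
        (div_pos (by positivity) (by positivity)), ?_, ?_⟩
    · have hpos : 0 < μ / L ^ 2 := by positivity
      have h2 : 2 * μ / L ^ 2 = 2 * (μ / L ^ 2) := by ring
      calc min (min (μ / L ^ 2) ((1 - s) / (2 * b))) (μ * (1 - s) / (4 * a))
          ≤ μ / L ^ 2 := le_trans (min_le_left _ _) (min_le_left _ _)
        _ < 2 * μ / L ^ 2 := by rw [h2]; linarith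
    · intro η hη hηlt
      have h1 : η < μ / L ^ 2 :=
        lt_of_lt_of_le hηlt (le_trans (min_le_left _ _) (min_le_left _ _))
      have h2 : η < (1 - s) / (2 * b) :=
        lt_of_lt_of_le hηlt (le_trans (min_le_left _ _) (min_le_right _ _))
      have h3 : η < μ * (1 - s) / (4 * a) :=
        lt_of_lt_of_le hηlt (min_le_right _ _)
      have hηL2 : η * L ^ 2 < μ := (lt_div_iff₀ hL2).mp h1
      have hημ : η * μ ≤ 1 := by nlinarith
      have h2' : η * (2 * b) < 1 - s := (lt_div_iff₀ (by positivity)).mp h2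
      have h3' : η * (4 * a) < μ * (1 - s) := (lt_div_iff₀ (by positivity)).mp h3
      -- bound on α
      have hαle : α η ≤ 1 - η * μ / 2 := by
        rw [hα]
        have hstep : 1 - η * (2 * μ - η * L ^ 2) ≤ 1 - η * μ := by nlinarith
        calc Real.sqrt (1 - η * (2 * μ - η * L ^ 2))
            ≤ Real.sqrt (1 - η * μ) := Real.sqrt_le_sqrt hstep
          _ ≤ 1 - η * μ / 2 := by
              rw [show (1 - η * μ / 2) = Real.sqrt ((1 - η * μ / 2) ^ 2) from
                (Real.sqrt_sq (by nlinarith)).symm]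
              apply Real.sqrt_le_sqrt; nlinarith [sq_nonneg (η * μ)]
      have hα0 : 0 ≤ α η := by rw [hα]; exact Real.sqrt_nonneg _
      -- bound on c1
      have hc1le : c1 η ≤ 1 - (1 - s) / 2 := by
        rw [hc1]
        have : b * η < (1 - s) / 2 := by linarith
        linarith
      -- key product bound
      have hημ0 : 0 < η * μ := mul_pos hη hμ
      have h1α : η * μ / 2 ≤ 1 - α η := by linarith
      have h1c : (1 - s) / 2 ≤ 1 - c1 η := by linarith
      have hprod : η * μ / 2 * ((1 - s) / 2) ≤ (1 - α η) * (1 - c1 η) :=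
        mul_le_mul h1α h1c (by linarith) (by linarith)
      have haη : a * η ^ 2 < η * μ / 2 * ((1 - s) / 2) := by
        have := mul_lt_mul_of_pos_left h3' hη
        nlinarith
      have hkey : g η - 1 = a * η ^ 2 - (1 - α η) * (1 - c1 η) := by rw [hg]; ring
      nlinarith
end
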